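/- For a subset Y of ℝⁿ, the following are equivalent: (a) for all x, y ∈ Y and all t ∈ ℝ, x ⊞ t·y ∈ Y (Y is an idempotent symmetric subspace); (b) for every m ≥ 1, all x⁽¹⁾,…,x⁽ᵐ⁾ ∈ Y and all t ∈ ℝᵐ, the coordinatewise m-ary combination ⊞_{i∈[m]} t_i x⁽ⁱ⁾ belongs to Y. -/
import Mathlib


open Filter Finset

/-- The binary idempotent operation `⊞`. -/
noncomputable def bop (a b : ℝ) : ℝ :=
  if |b| < |a| then a else if |a| < |b| then b else (a + b) / 2

/-- The unique real `(2p+1)`-th root of `t`. -/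
noncomputable def oddRoot (p : ℕ) (t : ℝ) : ℝ :=
  Real.sign t * |t| ^ ((1 : ℝ) / (2 * (p : ℝ) + 1))

/-- `ξ_I[u](α) = Card{i ∈ I : u i = α} − Card{i ∈ I : u i = −α}`. -/
noncomputable def xiMap {ι : Type*} (I : Finset ι) (u : ι → ℝ) (α : ℝ) : ℤ :=
  ((I.filter fun i => u i = α).card : ℤ) - ((I.filter fun i => u i = -α).card : ℤ)

/-- The residual index set `J_I(u)`. -/
noncomputable def resid {ι : Type*} (I : Finset ι) (u : ι → ℝ) : Finset ι :=
  I.filter fun i => xiMap I u (u i) ≠ 0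

/-- The `n`-ary extension `⊞_{i ∈ I} u i` of the binary operation `⊞`. -/
noncomputable def Fop {ι : Type*} (I : Finset ι) (u : ι → ℝ) : ℝ :=
  if h : (resid I u).Nonempty then
    if 0 < xiMap I u ((resid I u).sup' h fun i => |u i|) then (resid I u).sup' h u
    else if xiMap I u ((resid I u).sup' h fun i => |u i|) < 0 then (resid I u).inf' h u
    else 0
  else 0

/-- The Chebyshev norm `max_{i ∈ [n]} |x i|`. -/
noncomputable def chebNorm {n : ℕ} (x : Fin n → ℝ) : ℝ := ⨆ i, |x i|

/-- The ultrametric distance `d_⊞(x,y) = max_i |x_i ⊟ y_i|`. -/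
noncomputable def dB {n : ℕ} (x y : Fin n → ℝ) : ℝ := ⨆ i, |bop (x i) (-(y i))|

-- Auxiliary lemmas

lemma bop_eq_left {a b : ℝ} (h : |b| < |a|) : bop a b = a := if_pos h

lemma bop_eq_right {a b : ℝ} (h : |a| < |b|) : bop a b = b := by
  unfold bop; rw [if_neg (by linarith), if_pos h]

lemma bop_self (a : ℝ) : bop a a = a := by
  unfold bop; rw [if_neg (lt_irrefl _), if_neg (lt_irrefl _)]; ring

lemma bop_neg_right (a : ℝ) : bop a (-a) = 0 := by
  unfold bop; rw [abs_neg, if_neg (lt_irrefl _), if_neg (lt_irrefl _)]; ring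

lemma bop_neg_left (a : ℝ) : bop (-a) a = 0 := by
  unfold bop; rw [abs_neg, if_neg (lt_irrefl _), if_neg (lt_irrefl _)]; ring

lemma bop_zero_left (a : ℝ) : bop 0 a = a := by
  rcases eq_or_ne a 0 with rfl | h
  · exact bop_self 0
  · exact bop_eq_right (by simpa using abs_pos.mpr h)

lemma bop_zero_right (a : ℝ) : bop a 0 = a := by
  rcases eq_or_ne a 0 with rfl | h
  · exact bop_self 0
  · exact bop_eq_left (by simpa using abs_pos.mpr h)

section xi
variable {ι : Type*}

lemma xiMap_neg (I : Finset ι) (u : ι → ℝ) (α : ℝ) : xiMap I u (-α) = -(xiMap I u α) := by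
  unfold xiMap
  simp only [neg_neg]
  ring

lemma xiMap_zero (I : Finset ι) (u : ι → ℝ) : xiMap I u 0 = 0 := by
  unfold xiMap
  simp

lemma exists_eq_of_xiMap_pos {I : Finset ι} {u : ι → ℝ} {α : ℝ} (h : 0 < xiMap I u α) :
    ∃ i ∈ I, u i = α := by
  by_contra hc
  push_neg at hc
  have he : I.filter (fun i => u i = α) = ∅ :=
    Finset.filter_eq_empty_iff.mpr (fun {i} hi => hc i hi)
  unfold xiMap at h
  rw [he] at h
  simp at h
  omega

lemma card_filter_erase [DecidableEq ι] (I : Finset ι) (i : ι) (hi : i ∈ I)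
    (p : ι → Prop) [DecidablePred p] :
    (((I.erase i).filter p).card : ℤ) = ((I.filter p).card : ℤ) - if p i then 1 else 0 := by
  rw [Finset.filter_erase]
  by_cases h : p i
  · rw [if_pos h, Finset.card_erase_of_mem (Finset.mem_filter.mpr ⟨hi, h⟩)]
    have h1 : 1 ≤ (I.filter p).card := Finset.card_pos.mpr ⟨i, Finset.mem_filter.mpr ⟨hi, h⟩⟩
    omega
  · rw [if_neg h, Finset.erase_eq_of_notMem (by simp [Finset.mem_filter, h])]
    ring

lemma xiMap_erase [DecidableEq ι] (I : Finset ι) (u : ι → ℝ) (i : ι) (hi : i ∈ I) (α : ℝ) :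
    xiMap (I.erase i) u α =
      xiMap I u α - (if u i = α then 1 else 0) + (if u i = -α then 1 else 0) := by
  unfold xiMap
  rw [card_filter_erase I i hi, card_filter_erase I i hi]
  ring

lemma xiMap_erase_of_ne [DecidableEq ι] {I : Finset ι} {u : ι → ℝ} {i : ι} (hi : i ∈ I)
    {α : ℝ} (h1 : u i ≠ α) (h2 : u i ≠ -α) :
    xiMap (I.erase i) u α = xiMap I u α := by
  rw [xiMap_erase I u i hi, if_neg h1, if_neg h2]; ring

end xi
section spec
variable {ι : Type*}

def FopSpec (I : Finset ι) (u : ι → ℝ) (r : ℝ) : Prop :=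
  (0 < xiMap I u r ∧ ∀ i ∈ I, |r| < |u i| → xiMap I u (u i) = 0) ∨
  (r = 0 ∧ ∀ i ∈ I, xiMap I u (u i) = 0)

lemma mem_resid {I : Finset ι} {u : ι → ℝ} {i : ι} :
    i ∈ resid I u ↔ i ∈ I ∧ xiMap I u (u i) ≠ 0 := Finset.mem_filter

lemma fopSpec_fop (I : Finset ι) (u : ι → ℝ) : FopSpec I u (Fop I u) := by
  unfold Fop
  by_cases h : (resid I u).Nonempty
  · rw [dif_pos h]
    obtain ⟨j, hj, hjM⟩ := Finset.exists_mem_eq_sup' h (fun i => |u i|)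
    set M := (resid I u).sup' h (fun i => |u i|) with hMdef
    have hjmem := mem_resid.mp hj
    have hMnonneg : 0 ≤ M := hjM ▸ abs_nonneg _
    rcases lt_trichotomy (xiMap I u M) 0 with hc | hc | hc
    · rw [if_neg (by omega), if_pos hc]
      have hxineg : 0 < xiMap I u (-M) := by rw [xiMap_neg]; omega
      obtain ⟨i0, hi0I, hi0⟩ := exists_eq_of_xiMap_pos hxineg
      have hi0r : i0 ∈ resid I u := mem_resid.mpr ⟨hi0I, by rw [hi0, xiMap_neg]; omega⟩
      have hinf : (resid I u).inf' h u = -M := by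
        apply le_antisymm
        · exact le_trans (Finset.inf'_le u hi0r) (le_of_eq hi0)
        · apply Finset.le_inf'
          intro b hb
          have hb1 : |u b| ≤ M := Finset.le_sup' (fun i => |u i|) hb
          have := neg_abs_le (u b)
          linarith
      rw [hinf]
      left
      refine ⟨by rw [xiMap_neg]; omega, ?_⟩
      intro i hiI hgt
      by_contra hne
      have hmem : i ∈ resid I u := mem_resid.mpr ⟨hiI, hne⟩
      have hle : |u i| ≤ M := Finset.le_sup' (fun i => |u i|) hmem
      rw [abs_neg, abs_of_nonneg hMnonneg] at hgt
      linarith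
    · exfalso
      rcases (abs_eq hMnonneg).mp hjM.symm with hcase | hcase
      · exact hjmem.2 (by rw [hcase, hc])
      · exact hjmem.2 (by rw [hcase, xiMap_neg, hc, neg_zero])
    · rw [if_pos hc]
      obtain ⟨i0, hi0I, hi0⟩ := exists_eq_of_xiMap_pos hc
      have hi0r : i0 ∈ resid I u := mem_resid.mpr ⟨hi0I, by rw [hi0]; omega⟩
      have hsup : (resid I u).sup' h u = M := by
        apply le_antisymm
        · apply Finset.sup'_le
          intro b hb
          have hb1 : |u b| ≤ M := Finset.le_sup' (fun i => |u i|) hb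
          have := le_abs_self (u b)
          linarith
        · exact le_trans (le_of_eq hi0.symm) (Finset.le_sup' u hi0r)
      rw [hsup]
      left
      refine ⟨by omega, ?_⟩
      intro i hiI hgt
      by_contra hne
      have hmem : i ∈ resid I u := mem_resid.mpr ⟨hiI, hne⟩
      have hle : |u i| ≤ M := Finset.le_sup' (fun i => |u i|) hmem
      rw [abs_of_nonneg hMnonneg] at hgt
      linarith
  · rw [dif_neg h]
    right
    refine ⟨rfl, fun i hiI => ?_⟩
    by_contra hne
    exact h ⟨i, mem_resid.mpr ⟨hiI, hne⟩⟩

lemma fopSpec_unique {I : Finset ι} {u : ι → ℝ} {r r' : ℝ}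
    (h1 : FopSpec I u r) (h2 : FopSpec I u r') : r = r' := by
  rcases h1 with ⟨h1p, h1h⟩ | ⟨rfl, h1a⟩
  · rcases h2 with ⟨h2p, h2h⟩ | ⟨rfl, h2a⟩
    · obtain ⟨i, hiI, hui⟩ := exists_eq_of_xiMap_pos h1p
      obtain ⟨i', hi'I, hui'⟩ := exists_eq_of_xiMap_pos h2p
      rcases lt_trichotomy |r| |r'| with hlt | heq | hgt
      · have := h1h i' hi'I (by rw [hui']; exact hlt)
        rw [hui'] at this; omega
      · rcases abs_eq_abs.mp heq with h | h
        · exact h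
        · rw [h, xiMap_neg] at h1p; omega
      · have := h2h i hiI (by rw [hui]; exact hgt)
        rw [hui] at this; omega
    · obtain ⟨i, hiI, hui⟩ := exists_eq_of_xiMap_pos h1p
      have := h2a i hiI
      rw [hui] at this; omega
  · rcases h2 with ⟨h2p, h2h⟩ | ⟨rfl, h2a⟩
    · obtain ⟨i, hiI, hui⟩ := exists_eq_of_xiMap_pos h2p
      have := h1a i hiI
      rw [hui] at this; omega
    · rfl

lemma fop_eq_of_spec {I : Finset ι} {u : ι → ℝ} {r : ℝ} (h : FopSpec I u r) :
    Fop I u = r := fopSpec_unique (fopSpec_fop I u) h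

lemma fop_empty (u : ι → ℝ) : Fop (∅ : Finset ι) u = 0 := by
  apply fop_eq_of_spec
  right
  exact ⟨rfl, by simp⟩

lemma fop_ne_zero_spec {I : Finset ι} {u : ι → ℝ} (h : Fop I u ≠ 0) :
    0 < xiMap I u (Fop I u) ∧ ∀ i ∈ I, |Fop I u| < |u i| → xiMap I u (u i) = 0 := by
  rcases fopSpec_fop I u with hs | hs
  · exact hs
  · exact absurd hs.1 h

end spec
section emain
variable {ι : Type*} [DecidableEq ι]

lemma e_main (I : Finset ι) (u : ι → ℝ) (i : ι) (hi : i ∈ I) :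
    (bop (Fop (I.erase i) u) (u i) = Fop I u ∨ bop (Fop (I.erase i) u) (u i) = 0) ∧
    (u i = Fop I u → bop (Fop (I.erase i) u) (u i) = Fop I u) := by
  have hmemI : ∀ j ∈ I.erase i, j ∈ I := fun j hj => Finset.mem_of_mem_erase hj
  rcases fopSpec_fop I u with ⟨hpos, hhigh⟩ | ⟨hr0, hall⟩
  · -- r ≠ 0 main case
    have hrne : Fop I u ≠ 0 := by
      intro h
      rw [h, xiMap_zero] at hpos
      omega
    rcases lt_trichotomy |u i| |Fop I u| with hlt | heq | hgt
    · -- |u i| < |r| : g = r, e = r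
      have h1 : u i ≠ Fop I u := by
        intro h; rw [h] at hlt; exact lt_irrefl _ hlt
      have h2 : u i ≠ -(Fop I u) := by
        intro h; rw [h, abs_neg] at hlt; exact lt_irrefl _ hlt
      have hg : Fop (I.erase i) u = Fop I u := by
        apply fop_eq_of_spec
        left
        constructor
        · rw [xiMap_erase_of_ne hi h1 h2]; exact hpos
        · intro j hj hgt2
          have hj1 : u i ≠ u j := by
            intro h; rw [h] at hlt; exact absurd (lt_trans hlt hgt2) (lt_irrefl _)
          have hj2 : u i ≠ -(u j) := by
            intro h; rw [h, abs_neg] at hlt; exact absurd (lt_trans hlt hgt2) (lt_irrefl _)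
          rw [xiMap_erase_of_ne hi hj1 hj2]
          exact hhigh j (hmemI j hj) hgt2
      have he : bop (Fop (I.erase i) u) (u i) = Fop I u := by
        rw [hg]; exact bop_eq_left hlt
      exact ⟨Or.inl he, fun _ => he⟩
    · rcases abs_eq_abs.mp heq with hui | hui
      · -- u i = r
        have hne2 : u i ≠ -(Fop I u) := by
          intro h
          rw [hui] at h
          apply hrne
          linarith
        have hxe : xiMap (I.erase i) u (Fop I u) = xiMap I u (Fop I u) - 1 := by
          rw [xiMap_erase I u i hi, if_pos hui, if_neg hne2]
          ring
        have hhigh' : ∀ j ∈ I.erase i, |Fop I u| < |u j| →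
            xiMap (I.erase i) u (u j) = 0 := by
          intro j hj hgt2
          have hj1 : u i ≠ u j := by
            intro h; rw [← h, heq] at hgt2; exact lt_irrefl _ hgt2
          have hj2 : u i ≠ -(u j) := by
            intro h; rw [← abs_neg (u j), ← h, heq] at hgt2; exact lt_irrefl _ hgt2
          rw [xiMap_erase_of_ne hi hj1 hj2]
          exact hhigh j (hmemI j hj) hgt2
        by_cases hbig : 0 < xiMap (I.erase i) u (Fop I u)
        · have hg : Fop (I.erase i) u = Fop I u := by
            apply fop_eq_of_spec
            left
            exact ⟨hbig, hhigh'⟩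
          have he : bop (Fop (I.erase i) u) (u i) = Fop I u := by
            rw [hg, hui, bop_self]
          exact ⟨Or.inl he, fun _ => he⟩
        · have hxe0 : xiMap (I.erase i) u (Fop I u) = 0 := by omega
          have habs : |Fop (I.erase i) u| < |Fop I u| := by
            rcases fopSpec_fop (I.erase i) u with ⟨hp', hh'⟩ | ⟨hg0, _⟩
            · obtain ⟨j, hj, huj⟩ := exists_eq_of_xiMap_pos hp'
              by_contra hge
              push_neg at hge
              rcases lt_or_eq_of_le hge with hlt2 | heq2
              · have hlt2' : |Fop I u| < |u j| := by rw [huj]; exact hlt2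
                have hj1 : u i ≠ u j := by
                  intro h
                  rw [← h, heq] at hlt2'
                  exact lt_irrefl _ hlt2'
                have hj2 : u i ≠ -(u j) := by
                  intro h
                  rw [← abs_neg (u j), ← h, heq] at hlt2'
                  exact lt_irrefl _ hlt2'
                have hz := hhigh j (hmemI j hj) hlt2'
                rw [← huj, xiMap_erase_of_ne hi hj1 hj2] at hp'
                omega
              · rcases abs_eq_abs.mp heq2.symm with hg1 | hg1
                · rw [← hg1] at hxe0
                  omega
                · rw [hg1, xiMap_neg] at hp'
                  omega
            · rw [hg0, abs_zero]
              exact abs_pos.mpr hrne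
          have he : bop (Fop (I.erase i) u) (u i) = Fop I u := by
            rw [hui]
            exact bop_eq_right habs
          exact ⟨Or.inl he, fun _ => he⟩
      · -- u i = -r
        have hne1 : u i ≠ Fop I u := by
          intro h
          rw [hui] at h
          apply hrne
          linarith
        have hg : Fop (I.erase i) u = Fop I u := by
          apply fop_eq_of_spec
          left
          constructor
          · rw [xiMap_erase I u i hi, if_neg hne1, if_pos hui]
            omega
          · intro j hj hgt2
            have hj1 : u i ≠ u j := by
              intro h; rw [← h, hui, abs_neg] at hgt2; exact lt_irrefl _ hgt2
            have hj2 : u i ≠ -(u j) := by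
              intro h
              rw [← abs_neg (u j), ← h, hui, abs_neg] at hgt2
              exact lt_irrefl _ hgt2
            rw [xiMap_erase_of_ne hi hj1 hj2]
            exact hhigh j (hmemI j hj) hgt2
        have he : bop (Fop (I.erase i) u) (u i) = 0 := by
          rw [hg, hui, bop_neg_right]
        exact ⟨Or.inr he, fun h => absurd h hne1⟩
    · -- |u i| > |r| : g = -(u i), e = 0
      have hxi0 : xiMap I u (u i) = 0 := hhigh i hi hgt
      have huine : u i ≠ 0 := by
        intro h
        rw [h, abs_zero] at hgt
        exact absurd (lt_of_le_of_lt (abs_nonneg _) hgt) (lt_irrefl _)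
      have hg : Fop (I.erase i) u = -(u i) := by
        apply fop_eq_of_spec
        left
        constructor
        · rw [xiMap_erase I u i hi, xiMap_neg,
            if_neg (show u i ≠ -(u i) by intro h; apply huine; linarith),
            if_pos (neg_neg (u i)).symm]
          omega
        · intro j hj hgt2
          rw [abs_neg] at hgt2
          have hj1 : u i ≠ u j := by
            intro h; rw [h] at hgt2; exact lt_irrefl _ hgt2
          have hj2 : u i ≠ -(u j) := by
            intro h; rw [h, abs_neg] at hgt2; exact lt_irrefl _ hgt2
          rw [xiMap_erase_of_ne hi hj1 hj2]
          exact hhigh j (hmemI j hj) (lt_trans hgt hgt2)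
      have he : bop (Fop (I.erase i) u) (u i) = 0 := by
        rw [hg, bop_neg_left]
      refine ⟨Or.inr he, fun h => ?_⟩
      rw [h] at hgt
      exact absurd hgt (lt_irrefl _)
  · -- r = 0 case
    have he : bop (Fop (I.erase i) u) (u i) = 0 := by
      rcases eq_or_ne (u i) 0 with hui | hui
      · have hg : Fop (I.erase i) u = 0 := by
          apply fop_eq_of_spec
          right
          refine ⟨rfl, fun j hj => ?_⟩
          rw [xiMap_erase I u i hi, hall j (hmemI j hj)]
          have hifs : (if u i = u j then (1:ℤ) else 0) = (if u i = -(u j) then 1 else 0) := by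
            by_cases h : u j = 0
            · rw [if_pos (by rw [hui, h]), if_pos (by rw [hui, h, neg_zero])]
            · rw [if_neg (by rw [hui]; exact fun hh => h hh.symm),
                if_neg (by rw [hui]; intro hh; exact h (by linarith))]
          omega
        rw [hg, hui, bop_zero_left]
      · have hg : Fop (I.erase i) u = -(u i) := by
          apply fop_eq_of_spec
          left
          constructor
          · rw [xiMap_erase I u i hi, xiMap_neg, hall i hi,
              if_neg (show u i ≠ -(u i) by intro h; apply hui; linarith),
              if_pos (neg_neg (u i)).symm]
            omega
          · intro j hj hgt2
            rw [abs_neg] at hgt2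
            have hj1 : u i ≠ u j := by
              intro h; rw [h] at hgt2; exact lt_irrefl _ hgt2
            have hj2 : u i ≠ -(u j) := by
              intro h; rw [h, abs_neg] at hgt2; exact lt_irrefl _ hgt2
            rw [xiMap_erase_of_ne hi hj1 hj2]
            exact hall j (hmemI j hj)
        rw [hg, bop_neg_left]
    refine ⟨Or.inr he, fun h => ?_⟩
    rw [he, hr0]

end emain
section fold
variable {ι : Type*}

lemma foldl_bop_eq (f : ι → ℝ) (r : ℝ) (l : List ι) :
    ∀ (acc : ℝ), (acc = 0 ∨ acc = r) → (∀ i ∈ l, f i = 0 ∨ f i = r) →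
    (acc = r ∨ ∃ i ∈ l, f i = r) → List.foldl (fun a i => bop a (f i)) acc l = r := by
  induction l with
  | nil =>
    intro acc _ _ hex
    rcases hex with h | ⟨i, hi, _⟩
    · simpa using h
    · simp at hi
  | cons j l ih =>
    intro acc hacc hall hex
    simp only [List.foldl_cons]
    have hfj : f j = 0 ∨ f j = r := hall j (by simp)
    have hstep : bop acc (f j) = 0 ∨ bop acc (f j) = r := by
      rcases hacc with h | h <;> rcases hfj with h' | h' <;> rw [h, h'] <;>
        simp [bop_zero_left, bop_zero_right, bop_self]
    apply ih _ hstep (fun i hi => hall i (by simp [hi]))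
    rcases hex with h | ⟨i, hi, hfi⟩
    · left
      rcases hfj with h' | h' <;> rw [h, h']
      · exact bop_zero_right r
      · exact bop_self r
    · rcases List.mem_cons.mp hi with rfl | hi'
      · left
        rcases hacc with h | h <;> rw [h, hfi]
        · exact bop_zero_left r
        · exact bop_self r
      · right
        exact ⟨i, hi', hfi⟩

lemma fop_eq_foldl [DecidableEq ι] (I : Finset ι) (u : ι → ℝ) :
    List.foldl (fun a i => bop a (bop (Fop (I.erase i) u) (u i))) 0 I.toList = Fop I u := by
  apply foldl_bop_eq (fun i => bop (Fop (I.erase i) u) (u i)) (Fop I u) I.toList 0 (Or.inl rfl)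
  · intro i hi
    exact ((e_main I u i (Finset.mem_toList.mp hi)).1).symm
  · rcases eq_or_ne (Fop I u) 0 with h | h
    · exact Or.inl h.symm
    · obtain ⟨i, hiI, hui⟩ := exists_eq_of_xiMap_pos (fop_ne_zero_spec h).1
      exact Or.inr ⟨i, Finset.mem_toList.mpr hiI, (e_main I u i hiI).2 hui⟩

lemma foldl_coord {n : ℕ} (E : ι → (Fin n → ℝ)) (l : List ι) :
    ∀ (z : Fin n → ℝ) (k : Fin n),
    List.foldl (fun z i => fun k => bop (z k) (E i k)) z l k =
      List.foldl (fun a i => bop a (E i k)) (z k) l := by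
  induction l with
  | nil => intro z k; rfl
  | cons j l ih =>
    intro z k
    simp only [List.foldl_cons]
    exact ih _ k

end fold
section fin2

lemma xiMap_univ_fin2 (w : Fin 2 → ℝ) (α : ℝ) :
    xiMap (Finset.univ : Finset (Fin 2)) w α =
      ((if w 0 = α then 1 else 0) + (if w 1 = α then 1 else 0) : ℤ)
      - ((if w 0 = -α then 1 else 0) + (if w 1 = -α then 1 else 0)) := by
  unfold xiMap
  rw [Finset.card_filter, Finset.card_filter, Fin.sum_univ_two, Fin.sum_univ_two]
  push_cast
  ring

lemma fop_fin2 (w : Fin 2 → ℝ) : Fop Finset.univ w = bop (w 0) (w 1) := by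
  apply fop_eq_of_spec
  rcases lt_trichotomy |w 0| |w 1| with hlt | heq | hgt
  · rw [bop_eq_right hlt]
    left
    have h1ne : w 1 ≠ 0 := by
      intro h; rw [h, abs_zero] at hlt
      exact absurd (lt_of_le_of_lt (abs_nonneg _) hlt) (lt_irrefl _)
    constructor
    · rw [xiMap_univ_fin2,
        if_pos rfl,
        if_neg (show w 0 ≠ w 1 by intro h; rw [h] at hlt; exact lt_irrefl _ hlt),
        if_neg (show w 0 ≠ -(w 1) by intro h; rw [h, abs_neg] at hlt; exact lt_irrefl _ hlt),
        if_neg (show w 1 ≠ -(w 1) by intro h; apply h1ne; linarith)]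
      omega
    · have g0 : ¬ |w 1| < |w 0| := not_lt.mpr (le_of_lt hlt)
      have g1 : ¬ |w 1| < |w 1| := lt_irrefl _
      intro i _ hgt2
      exfalso
      fin_cases i
      · exact g0 hgt2
      · exact g1 hgt2
  · rcases abs_eq_abs.mp heq with h01 | h01
    · -- w 0 = w 1
      rcases eq_or_ne (w 0) 0 with h0 | h0
      · right
        have h1 : w 1 = 0 := by rw [← h01, h0]
        rw [h0, h1, bop_self]
        refine ⟨rfl, fun i _ => ?_⟩
        have g0 : xiMap Finset.univ w (w 0) = 0 := by rw [h0]; exact xiMap_zero _ _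
        have g1 : xiMap Finset.univ w (w 1) = 0 := by rw [h1]; exact xiMap_zero _ _
        fin_cases i
        · exact g0
        · exact g1
      · left
        rw [h01, bop_self]
        constructor
        · rw [xiMap_univ_fin2, if_pos h01, if_pos rfl,
            if_neg (show w 0 ≠ -(w 1) by intro h; apply h0; rw [h01] at h ⊢; linarith),
            if_neg (show w 1 ≠ -(w 1) by intro h; apply h0; rw [h01]; linarith)]
          omega
        · have g0 : ¬ |w 1| < |w 0| := not_lt.mpr (le_of_eq heq)
          have g1 : ¬ |w 1| < |w 1| := lt_irrefl _
          intro i _ hgt2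
          exfalso
          fin_cases i
          · exact g0 hgt2
          · exact g1 hgt2
    · -- w 0 = -(w 1)
      right
      have hsum : bop (w 0) (w 1) = 0 := by rw [h01]; exact bop_neg_left _
      refine ⟨hsum, fun i _ => ?_⟩
      have hx0 : xiMap Finset.univ w (w 0) = 0 := by
        rw [xiMap_univ_fin2, if_pos rfl,
          if_pos (show w 1 = -(w 0) by rw [h01]; ring)]
        by_cases h : w 1 = w 0
        · rw [if_pos h, if_pos (show w 0 = -(w 0) by linarith)]
          norm_num
        · rw [if_neg h, if_neg (show w 0 ≠ -(w 0) by intro hh; apply h; linarith)]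
          norm_num
      have hx1 : xiMap Finset.univ w (w 1) = 0 := by
        have hw1 : w 1 = -(w 0) := by rw [h01]; ring
        rw [hw1, xiMap_neg, hx0, neg_zero]
      fin_cases i
      · exact hx0
      · exact hx1
  · rw [bop_eq_left hgt]
    left
    have h0ne : w 0 ≠ 0 := by
      intro h; rw [h, abs_zero] at hgt
      exact absurd (lt_of_le_of_lt (abs_nonneg _) hgt) (lt_irrefl _)
    constructor
    · rw [xiMap_univ_fin2, if_pos rfl,
        if_neg (show w 1 ≠ w 0 by intro h; rw [← h] at hgt; exact lt_irrefl _ hgt),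
        if_neg (show w 0 ≠ -(w 0) by intro h; apply h0ne; linarith),
        if_neg (show w 1 ≠ -(w 0) by intro h; rw [h, abs_neg] at hgt; exact lt_irrefl _ hgt)]
      omega
    · have g0 : ¬ |w 0| < |w 0| := lt_irrefl _
      have g1 : ¬ |w 0| < |w 1| := not_lt.mpr (le_of_lt hgt)
      intro i _ hgt2
      exfalso
      fin_cases i
      · exact g0 hgt2
      · exact g1 hgt2

end fin2

/-- idempotent symmetric subspaces are stable under m-ary combinations. -/
theorem stmt4 (n : ℕ) (Y : Set (Fin n → ℝ)) :
    (∀ x ∈ Y, ∀ y ∈ Y, ∀ t : ℝ, (fun k => bop (x k) (t * y k)) ∈ Y) ↔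
    (∀ m : ℕ, 1 ≤ m → ∀ x : Fin m → (Fin n → ℝ), (∀ i, x i ∈ Y) → ∀ t : Fin m → ℝ,
      (fun k => Fop Finset.univ (fun i => t i * x i k)) ∈ Y) := by
  constructor
  · intro hbin m hm x hx t
    have hx0 : x ⟨0, hm⟩ ∈ Y := hx _
    have hzero : (fun _ : Fin n => (0 : ℝ)) ∈ Y := by
      have h := hbin _ hx0 _ hx0 (-1)
      have heq : (fun k => bop (x ⟨0, hm⟩ k) ((-1) * x ⟨0, hm⟩ k)) =
          (fun _ : Fin n => (0 : ℝ)) := by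
        funext k
        rw [neg_one_mul, bop_neg_right]
      rwa [heq] at h
    -- membership of folds
    have hfoldmem : ∀ (l : List (Fin m)) (E : Fin m → (Fin n → ℝ)), (∀ i ∈ l, E i ∈ Y) →
        ∀ z ∈ Y, List.foldl (fun z i => fun k => bop (z k) (E i k)) z l ∈ Y := by
      intro l E
      induction l with
      | nil => intro _ z hz; exact hz
      | cons j l ih =>
        intro hE z hz
        simp only [List.foldl_cons]
        apply ih (fun i hi => hE i (by simp [hi]))
        have h := hbin z hz (E j) (hE j (by simp)) 1
        have heq : (fun k => bop (z k) (1 * E j k)) = (fun k => bop (z k) (E j k)) := by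
          funext k; rw [one_mul]
        rwa [heq] at h
    have key : ∀ s : Finset (Fin m), (fun k => Fop s (fun i => t i * x i k)) ∈ Y := by
      intro s
      induction s using Finset.strongInduction with
      | _ s ih =>
        rcases s.eq_empty_or_nonempty with rfl | hsne
        · have heq : (fun k => Fop (∅ : Finset (Fin m)) (fun i => t i * x i k)) =
              (fun _ : Fin n => (0 : ℝ)) := by
            funext k; rw [fop_empty]
          rw [heq]
          exact hzero
        · set E : Fin m → (Fin n → ℝ) :=
            fun i => fun k => bop (Fop (s.erase i) (fun j => t j * x j k)) (t i * x i k)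
            with hE
          have hEmem : ∀ i ∈ s.toList, E i ∈ Y := by
            intro i hi
            have his : i ∈ s := Finset.mem_toList.mp hi
            have hg : (fun k => Fop (s.erase i) (fun j => t j * x j k)) ∈ Y :=
              ih _ (Finset.erase_ssubset his)
            have h := hbin _ hg _ (hx i) (t i)
            exact h
          have hmem := hfoldmem s.toList E hEmem _ hzero
          have heq : (fun k => Fop s (fun i => t i * x i k)) =
              List.foldl (fun z i => fun k => bop (z k) (E i k)) (fun _ => 0) s.toList := by
            funext k
            rw [foldl_coord]
            exact (fop_eq_foldl s (fun i => t i * x i k)).symm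
          rw [heq]
          exact hmem
    exact key Finset.univ
  · intro hm x hxY y hyY t
    have h2 := hm 2 (by norm_num) ![x, y]
      (by intro i; fin_cases i; exacts [hxY, hyY]) ![1, t]
    have heq : (fun k => Fop Finset.univ (fun i => ![(1 : ℝ), t] i * ![x, y] i k)) =
        (fun k => bop (x k) (t * y k)) := by
      funext k
      rw [fop_fin2]
      simp [Matrix.cons_val_zero, Matrix.cons_val_one, Matrix.head_cons]
    rwa [heq] at h2
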